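/- Let K be a finite abstract simplicial complex, f : K → ℝ^n a monotone function with sublevel filtration K^u = {σ ∈ K : f(σ) ≼ u}, and V a discrete gradient vector field on K consistent with this filtration; let C be the set of critical values of V and C̄ its closure under componentwise maxima. Then for every u ∈ ℝ^n with {c ∈ C̄ : c ≼ u} nonempty (with greatest element ū), there exist r ≥ 0 and a chain of subcomplexes K^u = K₀ ⊇ K₁ ⊇ … ⊇ K_r = K^{ū} such that for each i < r, K_i \ K_{i+1} = {σ_i, τ_i} where (σ_i, τ_i) ∈ V and σ_i is a free facet of τ_i in K_i; i.e., K^u collapses onto K^{ū} by elementary collapses along pairs of V (so the inclusion K^{ū} ↪ K^u induces isomorphisms on all homology groups). -/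

import Mathlib

/-- A finite abstract simplicial complex on the vertex set `V`. -/
def IsComplex {V : Type} [DecidableEq V] [Fintype V] (K : Finset (Finset V)) : Prop :=
  (∀ s ∈ K, s.Nonempty) ∧ (∀ v : V, ({v} : Finset V) ∈ K) ∧
    ∀ s ∈ K, ∀ t : Finset V, t ⊆ s → t.Nonempty → t ∈ K

/-- `α` is a facet of `β`: a codimension-one face. -/
def IsFacet {V : Type} [DecidableEq V] (α β : Finset V) : Prop :=
  α ⊆ β ∧ β.card = α.card + 1

/-- A discrete vector field on `K`: pairs `(α, β)` of simplices of `K` with `α`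
a facet of `β`, every simplex belonging to at most one pair. -/
def IsDVF {V : Type} [DecidableEq V] (K : Finset (Finset V))
    (W : Set (Finset V × Finset V)) : Prop :=
  (∀ p ∈ W, p.1 ∈ K ∧ p.2 ∈ K ∧ IsFacet p.1 p.2) ∧
    ∀ p ∈ W, ∀ q ∈ W, p ≠ q → p.1 ≠ q.1 ∧ p.1 ≠ q.2 ∧ p.2 ≠ q.1 ∧ p.2 ≠ q.2

/-- `W` admits a nontrivial closed `V`-path
`α₀, β₀, α₁, β₁, …, β_r, α_{r+1} = α₀` with `r ≥ 1`. -/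
def HasClosedPath {V : Type} [DecidableEq V] (W : Set (Finset V × Finset V)) : Prop :=
  ∃ (r : ℕ) (a b : ℕ → Finset V), 1 ≤ r ∧
    (∀ i ≤ r, (a i, b i) ∈ W ∧ IsFacet (a (i + 1)) (b i) ∧ a (i + 1) ≠ a i) ∧
    a (r + 1) = a 0

/-- A discrete gradient vector field: a discrete vector field with no
nontrivial closed `V`-path. -/
def IsGradient {V : Type} [DecidableEq V] (K : Finset (Finset V))
    (W : Set (Finset V × Finset V)) : Prop :=
  IsDVF K W ∧ ¬ HasClosedPath W

/-- A simplex of `K` is critical for `W` if it belongs to no pair of `W`. -/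
def IsCritical {V : Type} [DecidableEq V] (K : Finset (Finset V))
    (W : Set (Finset V × Finset V)) (σ : Finset V) : Prop :=
  σ ∈ K ∧ ∀ p ∈ W, σ ≠ p.1 ∧ σ ≠ p.2

/-- The set of critical values `C = {f σ : σ critical for W}`. -/
def CritVals {n : ℕ} {V : Type} [DecidableEq V] (K : Finset (Finset V))
    (W : Set (Finset V × Finset V)) (f : Finset V → (Fin n → ℝ)) :
    Set (Fin n → ℝ) :=
  {x | ∃ σ, IsCritical K W σ ∧ f σ = x}

/-- The closure of a set `C ⊆ ℝⁿ` under least upper bounds: all componentwise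
maxima (least upper bounds in the componentwise order) of nonempty finite
subsets of `C`. -/
def LubClosure {n : ℕ} (C : Set (Fin n → ℝ)) : Set (Fin n → ℝ) :=
  {x | ∃ S : Finset (Fin n → ℝ), S.Nonempty ∧ ↑S ⊆ C ∧ IsLUB (↑S : Set (Fin n → ℝ)) x}

/-- The sublevel set `K^u = {σ ∈ K : f σ ≼ u}`. -/
def SubLvl {n : ℕ} {V : Type} [DecidableEq V] (K : Finset (Finset V))
    (f : Finset V → (Fin n → ℝ)) (u : Fin n → ℝ) : Set (Finset V) :=
  {σ | σ ∈ K ∧ f σ ≤ u}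


/-- with `W` a discrete gradient vector field on `K` consistent
with the sublevel filtration of a monotone `f`, `C̄` the closure of the
critical values under componentwise maxima, and `ū` the greatest element of
`{c ∈ C̄ : c ≼ u}`, the sublevel complex `K^u` collapses onto `K^ū`: there is
a chain `K^u = K₀ ⊇ K₁ ⊇ … ⊇ K_r = K^ū` of elementary collapses along pairs
of `W`. -/
lemma collapse_aux {n : ℕ} {V : Type} [DecidableEq V] [Fintype V]
    (K : Finset (Finset V))
    (f : Finset V → (Fin n → ℝ))
    (hmono : ∀ α ∈ K, ∀ β ∈ K, α ⊆ β → f α ≤ f β)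
    (W : Set (Finset V × Finset V)) (hW : IsGradient K W)
    (u ubar : Fin n → ℝ)
    (hpaired : ∀ σ ∈ K, f σ ≤ u → ¬ f σ ≤ ubar → ∃ p ∈ W, σ = p.1 ∨ σ = p.2) :
    ∀ (m : ℕ) (D : Finset (Finset V)), D.card ≤ m →
      (∀ σ ∈ D, σ ∈ K ∧ f σ ≤ u ∧ ¬ f σ ≤ ubar) →
      (∀ p ∈ W, (p.1 ∈ D ↔ p.2 ∈ D)) →
      ∃ (r : ℕ) (Ks : ℕ → Set (Finset V)),
        Ks 0 = SubLvl K f ubar ∪ ↑D ∧ Ks r = SubLvl K f ubar ∧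
        ∀ i < r, Ks (i + 1) ⊆ Ks i ∧
          ∃ σ τ : Finset V, (σ, τ) ∈ W ∧
            Ks i \ Ks (i + 1) = {σ, τ} ∧ IsFacet σ τ ∧
            ∀ β ∈ Ks i, IsFacet σ β → β = τ := by
  classical
  intro m
  induction m with
  | zero =>
    intro D hcard _ _
    have hDe : D = ∅ := Finset.card_eq_zero.mp (Nat.le_zero.mp hcard)
    subst hDe
    exact ⟨0, fun _ => SubLvl K f ubar, by simp, rfl,
      fun i hi => absurd hi (Nat.not_lt_zero i)⟩
  | succ m ih =>
    intro D hcard hD hclos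
    rcases D.eq_empty_or_nonempty with hDe | ⟨σ0, hσ0⟩
    · subst hDe
      exact ⟨0, fun _ => SubLvl K f ubar, by simp, rfl,
        fun i hi => absurd hi (Nat.not_lt_zero i)⟩
    obtain ⟨hσ0K, hσ0u, hσ0n⟩ := hD σ0 hσ0
    obtain ⟨p0, hp0W, hp0e⟩ := hpaired σ0 hσ0K hσ0u hσ0n
    have hp0D : p0.1 ∈ D ∧ p0.2 ∈ D := by
      rcases hp0e with h | h
      · have h1 : p0.1 ∈ D := h ▸ hσ0
        exact ⟨h1, (hclos p0 hp0W).mp h1⟩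
      · have h2 : p0.2 ∈ D := h ▸ hσ0
        exact ⟨(hclos p0 hp0W).mpr h2, h2⟩
    set T : Finset (Finset V × Finset V) := (D ×ˢ D).filter (fun p => p ∈ W) with hT
    have hmemT : ∀ p, p ∈ T ↔ (p.1 ∈ D ∧ p.2 ∈ D ∧ p ∈ W) := by
      intro p
      simp [hT, Finset.mem_filter, Finset.mem_product, and_assoc]
    have hp0T : p0 ∈ T := (hmemT p0).mpr ⟨hp0D.1, hp0D.2, hp0W⟩
    obtain ⟨p1, hp1T, hmax⟩ := T.exists_max_image (fun p => p.2.card) ⟨p0, hp0T⟩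
    set T' : Finset (Finset V × Finset V) := T.filter (fun p => p.2.card = p1.2.card) with hT'
    have hp1T' : p1 ∈ T' := by
      rw [hT', Finset.mem_filter]; exact ⟨hp1T, rfl⟩
    have hfacetW : ∀ p ∈ W, p.1 ⊆ p.2 ∧ p.2.card = p.1.card + 1 := by
      intro p hp
      exact (hW.1.1 p hp).2.2
    have hfree : ∃ p ∈ T', ∀ β ∈ D, p.1 ⊆ β → β.card = p.1.card + 1 → β = p.2 := by
      by_contra hcon
      push_neg at hcon
      have H : ∀ p ∈ T', ∃ q ∈ T', p.1 ⊆ q.2 ∧ p.1 ≠ q.1 := by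
        intro p hpT'
        obtain ⟨β, hβD, hβ1, hβ2, hβ3⟩ := hcon p hpT'
        have hpT : p ∈ T := (Finset.mem_filter.mp hpT').1
        have hpW : p ∈ W := ((hmemT p).mp hpT).2.2
        have hpd : p.2.card = p1.2.card := (Finset.mem_filter.mp hpT').2
        have hpfac := (hfacetW p hpW).2
        obtain ⟨βK, hβu, hβn⟩ := hD β hβD
        obtain ⟨q, hqW, hqe⟩ := hpaired β βK hβu hβn
        have hqD : q.1 ∈ D ∧ q.2 ∈ D := by
          rcases hqe with h | h
          · have h1 : q.1 ∈ D := h ▸ hβD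
            exact ⟨h1, (hclos q hqW).mp h1⟩
          · have h2 : q.2 ∈ D := h ▸ hβD
            exact ⟨(hclos q hqW).mpr h2, h2⟩
        have hqT : q ∈ T := (hmemT q).mpr ⟨hqD.1, hqD.2, hqW⟩
        have hqfac := (hfacetW q hqW).2
        rcases hqe with h | h
        · exfalso
          have hmq := hmax q hqT
          have hq1 : q.1.card = β.card := by rw [h]
          omega
        · have hq2 : q.2.card = β.card := by rw [h]
          have hqT' : q ∈ T' := by
            rw [hT', Finset.mem_filter]
            exact ⟨hqT, by omega⟩
          refine ⟨q, hqT', by rw [← h]; exact hβ1, ?_⟩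
          intro hpq1
          by_cases hpq : p = q
          · exact hβ3 (by rw [hpq]; exact h)
          · exact (hW.1.2 p hpW q hqW hpq).1 hpq1
      have H' : ∀ x : {q // q ∈ T'}, ∃ y : {q // q ∈ T'},
          (x : Finset V × Finset V).1 ⊆ (y : Finset V × Finset V).2 ∧
          (x : Finset V × Finset V).1 ≠ (y : Finset V × Finset V).1 := by
        intro x
        obtain ⟨q, hq, h1, h2⟩ := H x.1 x.2
        exact ⟨⟨q, hq⟩, h1, h2⟩
      choose g hg using H'
      set h : ℕ → {q // q ∈ T'} := fun i => g^[i] ⟨p1, hp1T'⟩ with hh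
      have key : ∀ m', ((h m' : Finset V × Finset V)).1 ⊆ ((h (m' + 1) : Finset V × Finset V)).2 ∧
          ((h m' : Finset V × Finset V)).1 ≠ ((h (m' + 1) : Finset V × Finset V)).1 := by
        intro m'
        have e : h (m' + 1) = g (h m') := Function.iterate_succ_apply' g m' _
        rw [e]
        exact hg (h m')
      obtain ⟨i, j, hlt, heq⟩ : ∃ i j, i < j ∧ h i = h j := by
        obtain ⟨i, j, hij, heq⟩ := Finite.exists_ne_map_eq_of_infinite h
        rcases lt_or_gt_of_ne hij with h' | h'
        · exact ⟨i, j, h', heq⟩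
        · exact ⟨j, i, h', heq.symm⟩
      have hk2 : 2 ≤ j - i := by
        by_contra hc2
        have hji : j = i + 1 := by omega
        have hne := (key i).2
        rw [← hji, ← heq] at hne
        exact hne rfl
      have hcards : ∀ x : {q // q ∈ T'}, (x : Finset V × Finset V) ∈ W ∧
          ((x : Finset V × Finset V)).2.card = p1.2.card ∧
          ((x : Finset V × Finset V)).2.card = ((x : Finset V × Finset V)).1.card + 1 := by
        intro x
        have hx : (x : Finset V × Finset V) ∈ T ∧ (x : Finset V × Finset V).2.card = p1.2.card :=
          Finset.mem_filter.mp x.2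
        have hxW : (x : Finset V × Finset V) ∈ W := ((hmemT _).mp hx.1).2.2
        exact ⟨hxW, hx.2, (hfacetW _ hxW).2⟩
      apply hW.2
      refine ⟨j - i - 1, fun t => ((h (j - t) : Finset V × Finset V)).1,
        fun t => ((h (j - t) : Finset V × Finset V)).2, by omega, ?_, ?_⟩
      · intro t ht
        show (((h (j - t) : Finset V × Finset V)).1, ((h (j - t) : Finset V × Finset V)).2) ∈ W ∧
          IsFacet ((h (j - (t + 1)) : Finset V × Finset V)).1 ((h (j - t) : Finset V × Finset V)).2 ∧
          ((h (j - (t + 1)) : Finset V × Finset V)).1 ≠ ((h (j - t) : Finset V × Finset V)).1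
        have h1 : j - t = (j - (t + 1)) + 1 := by omega
        have k1 := key (j - (t + 1))
        rw [← h1] at k1
        obtain ⟨-, c1a, c1b⟩ := hcards (h (j - t))
        obtain ⟨-, c2a, c2b⟩ := hcards (h (j - (t + 1)))
        refine ⟨?_, And.intro k1.1 (by omega), fun e => k1.2 e⟩
        have := (hcards (h (j - t))).1
        simpa using this
      · show ((h (j - (j - i - 1 + 1)) : Finset V × Finset V)).1
            = ((h (j - 0) : Finset V × Finset V)).1
        have e1 : j - (j - i - 1 + 1) = i := by omega
        have e2 : j - 0 = j := by omega
        rw [e1, e2, heq]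
    obtain ⟨p, hpT', hpfree⟩ := hfree
    have hpT : p ∈ T := (Finset.mem_filter.mp hpT').1
    have hpW : p ∈ W := ((hmemT p).mp hpT).2.2
    have hp1D : p.1 ∈ D := ((hmemT p).mp hpT).1
    have hp2D : p.2 ∈ D := ((hmemT p).mp hpT).2.1
    obtain ⟨hp1K, hp1u, hp1n⟩ := hD p.1 hp1D
    obtain ⟨hp2K, hp2u, hp2n⟩ := hD p.2 hp2D
    have hpfac := hfacetW p hpW
    have hp12 : p.1 ≠ p.2 := by
      intro e
      have : p.2.card = p.1.card + 1 := hpfac.2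
      rw [e] at this
      omega
    set D' : Finset (Finset V) := (D.erase p.1).erase p.2 with hD'
    have hmemD' : ∀ x, x ∈ D' ↔ x ≠ p.2 ∧ x ≠ p.1 ∧ x ∈ D := by
      intro x
      rw [hD', Finset.mem_erase, Finset.mem_erase]
    have hcard' : D'.card ≤ m := by
      have h1 : p.2 ∈ D.erase p.1 := Finset.mem_erase.mpr ⟨hp12.symm, hp2D⟩
      have e1 : D'.card = (D.erase p.1).card - 1 := by
        rw [hD', Finset.card_erase_of_mem h1]
      have e2 : (D.erase p.1).card = D.card - 1 := Finset.card_erase_of_mem hp1D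
      have h2 : 0 < D.card := Finset.card_pos.mpr ⟨p.1, hp1D⟩
      omega
    have hD2 : ∀ σ ∈ D', σ ∈ K ∧ f σ ≤ u ∧ ¬ f σ ≤ ubar := by
      intro σ hσ
      exact hD σ ((hmemD' σ).mp hσ).2.2
    have hclos' : ∀ q ∈ W, (q.1 ∈ D' ↔ q.2 ∈ D') := by
      intro q hqW
      by_cases hpq : q = p
      · subst hpq
        rw [hmemD', hmemD']
        simp [hp12]
      · have hne := hW.1.2 q hqW p hpW hpq
        rw [hmemD', hmemD']
        have := hclos q hqW
        tauto
    obtain ⟨r', Ks', h0', hr', hcol'⟩ := ih D' hcard' hD2 hclos'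
    refine ⟨r' + 1, fun i => if i = 0 then SubLvl K f ubar ∪ ↑D else Ks' (i - 1), rfl, ?_, ?_⟩
    · show Ks' (r' + 1 - 1) = SubLvl K f ubar
      simpa using hr'
    · intro i hi
      match i with
      | 0 =>
        have e1 : (fun i => if i = 0 then SubLvl K f ubar ∪ ↑D else Ks' (i - 1)) (0 + 1)
            = SubLvl K f ubar ∪ ↑D' := h0'
        have e0 : (fun i => if i = 0 then SubLvl K f ubar ∪ ↑D else Ks' (i - 1)) 0
            = SubLvl K f ubar ∪ ↑D := rfl
        rw [e0, e1]
        have hsub : SubLvl K f ubar ∪ ↑D' ⊆ SubLvl K f ubar ∪ ↑D := by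
          apply Set.union_subset_union_right
          intro x hx
          exact ((hmemD' x).mp hx).2.2
        refine ⟨hsub, p.1, p.2, by rw [Prod.mk.eta]; exact hpW, ?_, hpfac, ?_⟩
        · ext x
          constructor
          · rintro ⟨hx1, hx2⟩
            have hxS : x ∉ SubLvl K f ubar := fun hs => hx2 (Or.inl hs)
            have hxD : x ∈ D := by
              rcases hx1 with hs | hd
              · exact absurd hs hxS
              · exact hd
            have hxD' : x ∉ D' := fun hd => hx2 (Or.inr hd)
            by_cases e1 : x = p.1
            · exact Or.inl e1
            · by_cases e2 : x = p.2
              · exact Or.inr e2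
              · exact absurd ((hmemD' x).mpr ⟨e2, e1, hxD⟩) hxD'
          · intro hx
            have hx12 : x = p.1 ∨ x = p.2 := hx
            have hxD : x ∈ D := by
              rcases hx12 with e | e
              · rw [e]; exact hp1D
              · rw [e]; exact hp2D
            have hxn : ¬ f x ≤ ubar := by
              rcases hx12 with e | e
              · rw [e]; exact hp1n
              · rw [e]; exact hp2n
            refine ⟨Or.inr hxD, ?_⟩
            rintro (hs | hd)
            · exact hxn hs.2
            · rcases hx12 with e | e
              · exact ((hmemD' x).mp hd).2.1 e
              · exact ((hmemD' x).mp hd).1 e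
        · intro β hβ hfac
          have hfac' : p.1 ⊆ β ∧ β.card = p.1.card + 1 := hfac
          rcases hβ with hs | hd
          · exfalso
            have hβK : β ∈ K := hs.1
            have : f p.1 ≤ ubar := le_trans (hmono p.1 hp1K β hβK hfac'.1) hs.2
            exact hp1n this
          · exact hpfree β hd hfac'.1 hfac'.2
      | (j + 1) =>
        have hj : j < r' := by omega
        exact hcol' j hj

theorem stmt_4 {n : ℕ} (hn : 0 < n) {V : Type} [DecidableEq V] [Fintype V]
    (K : Finset (Finset V)) (hK : IsComplex K)
    (f : Finset V → (Fin n → ℝ))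
    (hmono : ∀ α ∈ K, ∀ β ∈ K, α ⊆ β → f α ≤ f β)
    (W : Set (Finset V × Finset V)) (hW : IsGradient K W)
    (hcons : ∀ p ∈ W, f p.1 = f p.2)
    (u ubar : Fin n → ℝ)
    (hubar : IsGreatest {c | c ∈ LubClosure (CritVals K W f) ∧ c ≤ u} ubar) :
    ∃ (r : ℕ) (Ks : ℕ → Set (Finset V)),
      Ks 0 = SubLvl K f u ∧ Ks r = SubLvl K f ubar ∧
      ∀ i < r, Ks (i + 1) ⊆ Ks i ∧
        ∃ σ τ : Finset V, (σ, τ) ∈ W ∧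
          Ks i \ Ks (i + 1) = {σ, τ} ∧ IsFacet σ τ ∧
          ∀ β ∈ Ks i, IsFacet σ β → β = τ := by
  classical
  have hle : ubar ≤ u := hubar.1.2
  have hpaired : ∀ σ ∈ K, f σ ≤ u → ¬ f σ ≤ ubar → ∃ p ∈ W, σ = p.1 ∨ σ = p.2 := by
    intro σ hσ hσu hσn
    by_contra hc
    push_neg at hc
    have hcrit : IsCritical K W σ := And.intro hσ (fun p hp => hc p hp)
    have hC : f σ ∈ CritVals K W f := ⟨σ, hcrit, rfl⟩
    have hCl : f σ ∈ LubClosure (CritVals K W f) := by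
      refine ⟨{f σ}, Finset.singleton_nonempty _, ?_, ?_⟩
      · rw [Finset.coe_singleton]
        exact Set.singleton_subset_iff.mpr hC
      · rw [Finset.coe_singleton]
        exact isLUB_singleton
    exact hσn (hubar.2 ⟨hCl, hσu⟩)
  set D0 : Finset (Finset V) := K.filter (fun σ => f σ ≤ u ∧ ¬ f σ ≤ ubar) with hD0
  have hD : ∀ σ ∈ D0, σ ∈ K ∧ f σ ≤ u ∧ ¬ f σ ≤ ubar := by
    intro σ hσ
    rw [hD0, Finset.mem_filter] at hσ
    exact ⟨hσ.1, hσ.2.1, hσ.2.2⟩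
  have hclos : ∀ p ∈ W, (p.1 ∈ D0 ↔ p.2 ∈ D0) := by
    intro p hp
    have h1 := hW.1.1 p hp
    have h2 : f p.1 = f p.2 := hcons p hp
    rw [hD0, Finset.mem_filter, Finset.mem_filter, h2]
    exact ⟨fun h => ⟨h1.2.1, h.2⟩, fun h => ⟨h1.1, h.2⟩⟩
  obtain ⟨r, Ks, h0, hr, hcol⟩ :=
    collapse_aux K f hmono W hW u ubar hpaired D0.card D0 le_rfl hD hclos
  refine ⟨r, Ks, ?_, hr, hcol⟩
  rw [h0]
  ext σ
  constructor
  · rintro (hs | hd)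
    · exact ⟨hs.1, le_trans hs.2 hle⟩
    · have hd' : σ ∈ D0 := hd
      obtain ⟨h1, h2, h3⟩ := hD σ hd'
      exact ⟨h1, h2⟩
  · rintro ⟨h1, h2⟩
    by_cases hb : f σ ≤ ubar
    · exact Or.inl ⟨h1, hb⟩
    · refine Or.inr ?_
      show σ ∈ D0
      rw [hD0, Finset.mem_filter]
      exact ⟨h1, h2, hb⟩
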